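/- Let J ↪ E ↠ C be an extension of projective systems of V-algebras (written as a projective system of algebra extensions indexed by a directed set N, with structure maps α, β, γ). If for every m ∈ N there exist n₁ ≥ m and j₁ ∈ ℕ* with α_{m,n₁}(A_{n₁}^{j₁}) ⊆ π·A_m, and for every n there exist n₂ ≥ n and j₂ ∈ ℕ* with γ_{n,n₂}(C_{n₂}^{j₂}) ⊆ π·C_n (i.e., both A and C are nilpotent mod π), then for every m there exist n and j with β_{m,n}(B_n^j) ⊆ π·B_m (i.e., the middle term B = E is nilpotent mod π); in fact one can take j = j₁·j₂. -/

import Mathlib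

/-!
Statement 4: If `A ↪ B ↠ C` is a level-wise extension of projective systems of (possibly
non-unital) `V`-algebras over a directed index set, and both `A` and `C` are nilpotent
mod `π`, then so is the middle term `B`.
-/

/-- Product of `V`-submodules of a non-unital algebra. -/
def Submodule.mulSpan {V A : Type*} [CommRing V] [NonUnitalRing A] [Module V A]
    (M N : Submodule V A) : Submodule V A :=
  Submodule.span V {x : A | ∃ m ∈ M, ∃ n ∈ N, x = m * n}

/-- `pw M j = M^(j+1)`: the span of `(j+1)`-fold products of elements of `M`. -/
def Submodule.pw {V A : Type*} [CommRing V] [NonUnitalRing A] [Module V A]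
    (M : Submodule V A) : ℕ → Submodule V A
  | 0 => M
  | (j + 1) => M.mulSpan (Submodule.pw M j)

namespace Submodule

variable {V A : Type*} [CommRing V] [NonUnitalRing A] [Module V A]
  [SMulCommClass V A A] [IsScalarTower V A A]

theorem mul_mem_mulSpan {M N : Submodule V A} {m n : A} (hm : m ∈ M) (hn : n ∈ N) :
    m * n ∈ M.mulSpan N := subset_span ⟨m, hm, n, hn, rfl⟩

theorem mulSpan_le {M N P : Submodule V A} (h : ∀ m ∈ M, ∀ n ∈ N, m * n ∈ P) :
    M.mulSpan N ≤ P := by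
  rw [mulSpan, span_le]
  rintro x ⟨m, hm, n, hn, rfl⟩
  exact h m hm n hn

theorem mulSpan_mono {M M' N N' : Submodule V A} (h1 : M ≤ M') (h2 : N ≤ N') :
    M.mulSpan N ≤ M'.mulSpan N' :=
  mulSpan_le fun m hm n hn => mul_mem_mulSpan (h1 hm) (h2 hn)

theorem mulSpan_assoc_le (M N P : Submodule V A) :
    M.mulSpan (N.mulSpan P) ≤ (M.mulSpan N).mulSpan P := by
  apply mulSpan_le
  intro m hm n hn
  have key : N.mulSpan P ≤ ((M.mulSpan N).mulSpan P).comap (LinearMap.mulLeft V m) := by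
    rw [mulSpan, span_le]
    rintro x ⟨a, ha, b, hb, rfl⟩
    simp only [SetLike.mem_coe, mem_comap, LinearMap.mulLeft_apply]
    rw [← mul_assoc]
    exact mul_mem_mulSpan (mul_mem_mulSpan hm ha) hb
  exact key hn

theorem pw_mono {M N : Submodule V A} (h : M ≤ N) : ∀ j, M.pw j ≤ N.pw j
  | 0 => h
  | (j+1) => mulSpan_mono h (pw_mono h j)

theorem pw_add (M : Submodule V A) : ∀ a b, M.pw (a + b + 1) ≤ (M.pw a).mulSpan (M.pw b)
  | 0, b => by
    rw [Nat.zero_add]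
    exact le_rfl
  | (a+1), b => by
    have h1 : a + 1 + b + 1 = (a + b + 1) + 1 := by omega
    rw [h1]
    calc M.pw ((a + b + 1) + 1) = M.mulSpan (M.pw (a + b + 1)) := rfl
      _ ≤ M.mulSpan ((M.pw a).mulSpan (M.pw b)) := mulSpan_mono le_rfl (pw_add M a b)
      _ ≤ (M.mulSpan (M.pw a)).mulSpan (M.pw b) := mulSpan_assoc_le _ _ _
      _ = (M.pw (a+1)).mulSpan (M.pw b) := rfl

theorem pw_pw (M : Submodule V A) : ∀ j k, M.pw (j * k + j + k) ≤ (M.pw k).pw j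
  | 0, k => by
    simp only [Nat.zero_mul, Nat.zero_add]
    exact le_rfl
  | (j+1), k => by
    have h1 : (j+1) * k + (j+1) + k = k + (j * k + j + k) + 1 := by ring
    rw [h1]
    calc M.pw (k + (j * k + j + k) + 1) ≤ (M.pw k).mulSpan (M.pw (j * k + j + k)) :=
        pw_add M k _
      _ ≤ (M.pw k).mulSpan ((M.pw k).pw j) := mulSpan_mono le_rfl (pw_pw M j k)
      _ = (M.pw k).pw (j+1) := rfl

theorem pw_hom {B : Type*} [NonUnitalRing B] [Module V B]
    [SMulCommClass V B B] [IsScalarTower V B B]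
    (f : A →ₙₐ[V] B) {M : Submodule V A} {N : Submodule V B}
    (hf : ∀ x ∈ M, f x ∈ N) : ∀ j, ∀ x ∈ M.pw j, f x ∈ N.pw j
  | 0 => hf
  | (j+1) => by
    intro x hx
    have key : M.pw (j+1) ≤ (N.pw (j+1)).comap (f : A →ₗ[V] B) := by
      apply mulSpan_le
      intro a ha b hb
      have : f (a * b) ∈ N.pw (j+1) := by
        rw [map_mul]
        exact mul_mem_mulSpan (hf a ha) (pw_hom f hf j b hb)
      exact this
    exact key hx

end Submodule

/-- Auxiliary submodule: elements of the form `π • b + i a` with `a ∈ M`. -/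
def auxU {V A B : Type*} [CommRing V] [NonUnitalRing A] [Module V A]
    [NonUnitalRing B] [Module V B]
    (π : V) (i : A →ₙₐ[V] B) (M : Submodule V A) : Submodule V B where
  carrier := {b | ∃ b' : B, ∃ a ∈ M, b = π • b' + i a}
  add_mem' := by
    rintro x y ⟨b', a, ha, rfl⟩ ⟨c', c, hc, rfl⟩
    exact ⟨b' + c', a + c, M.add_mem ha hc, by rw [map_add, smul_add]; abel⟩
  zero_mem' := ⟨0, 0, M.zero_mem, by simp⟩
  smul_mem' := by
    rintro v x ⟨b', a, ha, rfl⟩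
    refine ⟨v • b', v • a, M.smul_mem v ha, ?_⟩
    rw [map_smul, smul_add, smul_smul, smul_smul, mul_comm]

theorem extension_nilpotent_mod_pi
    {V : Type*} [CommRing V] (π : V)
    {ι : Type*} [Preorder ι]
    (A B C : ι → Type*)
    [∀ n, NonUnitalRing (A n)] [∀ n, Module V (A n)]
    [∀ n, SMulCommClass V (A n) (A n)] [∀ n, IsScalarTower V (A n) (A n)]
    [∀ n, NonUnitalRing (B n)] [∀ n, Module V (B n)]
    [∀ n, SMulCommClass V (B n) (B n)] [∀ n, IsScalarTower V (B n) (B n)]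
    [∀ n, NonUnitalRing (C n)] [∀ n, Module V (C n)]
    [∀ n, SMulCommClass V (C n) (C n)] [∀ n, IsScalarTower V (C n) (C n)]
    -- structure maps of the three projective systems
    (α : ∀ m n : ι, m ≤ n → (A n →ₙₐ[V] A m))
    (β : ∀ m n : ι, m ≤ n → (B n →ₙₐ[V] B m))
    (γ : ∀ m n : ι, m ≤ n → (C n →ₙₐ[V] C m))
    (hβcomp : ∀ (m n p : ι) (h1 : m ≤ n) (h2 : n ≤ p),
      (β m n h1).comp (β n p h2) = β m p (h1.trans h2))
    -- the level-wise extension `A_n ↪ B_n ↠ C_n`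
    (i : ∀ n, A n →ₙₐ[V] B n) (p : ∀ n, B n →ₙₐ[V] C n)
    (hi : ∀ n, Function.Injective (i n))
    (hp : ∀ n, Function.Surjective (p n))
    (hexact : ∀ n, ∀ b : B n, p n b = 0 ↔ b ∈ Set.range (i n))
    (hsq_i : ∀ (m n : ι) (h : m ≤ n), (i m).comp (α m n h) = (β m n h).comp (i n))
    (hsq_p : ∀ (m n : ι) (h : m ≤ n), (p m).comp (β m n h) = (γ m n h).comp (p n))
    -- `A` is nilpotent mod `π`
    (hA : ∀ m : ι, ∃ n : ι, ∃ h : m ≤ n, ∃ j : ℕ,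
      ∀ x ∈ (⊤ : Submodule V (A n)).pw j, ∃ y : A m, α m n h x = π • y)
    -- `C` is nilpotent mod `π`
    (hC : ∀ m : ι, ∃ n : ι, ∃ h : m ≤ n, ∃ j : ℕ,
      ∀ x ∈ (⊤ : Submodule V (C n)).pw j, ∃ y : C m, γ m n h x = π • y) :
    -- then `B` is nilpotent mod `π`
    ∀ m : ι, ∃ n : ι, ∃ h : m ≤ n, ∃ j : ℕ,
      ∀ x ∈ (⊤ : Submodule V (B n)).pw j, ∃ y : B m, β m n h x = π • y := by

  intro m
  obtain ⟨n₁, h₁, j₁, hA₁⟩ := hA m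
  obtain ⟨n₂, h₂, j₂, hC₁⟩ := hC n₁
  refine ⟨n₂, h₁.trans h₂, j₁ * j₂ + j₁ + j₂, ?_⟩
  intro x hx
  -- Claim A: β sends (j₂+1)-fold products into π•B + i(A)
  have claimA : ∀ z ∈ (⊤ : Submodule V (B n₂)).pw j₂,
      β n₁ n₂ h₂ z ∈ auxU π (i n₁) (⊤ : Submodule V (A n₁)) := by
    intro z hz
    have hpz : p n₂ z ∈ (⊤ : Submodule V (C n₂)).pw j₂ :=
      Submodule.pw_hom (p n₂) (N := (⊤ : Submodule V (C n₂))) (fun _ _ => Submodule.mem_top) j₂ z hz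
    obtain ⟨c, hc⟩ := hC₁ (p n₂ z) hpz
    obtain ⟨b'', hb''⟩ := hp n₁ c
    have hcommp : p n₁ (β n₁ n₂ h₂ z) = γ n₁ n₂ h₂ (p n₂ z) :=
      DFunLike.congr_fun (hsq_p n₁ n₂ h₂) z
    have hker : p n₁ (β n₁ n₂ h₂ z - π • b'') = 0 := by
      rw [map_sub, map_smul, hb'', hcommp, hc, sub_self]
    rw [hexact] at hker
    obtain ⟨a, ha⟩ := hker
    exact ⟨b'', a, trivial, by rw [ha]; abel⟩
  -- Claim C: powers of the auxiliary submodule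
  have claimC : ∀ j, ∀ w ∈ (auxU π (i n₁) (⊤ : Submodule V (A n₁))).pw j,
      w ∈ auxU π (i n₁) ((⊤ : Submodule V (A n₁)).pw j) := by
    intro j
    induction j with
    | zero => exact fun w hw => hw
    | succ j ih =>
      intro w hw
      have key : (auxU π (i n₁) (⊤ : Submodule V (A n₁))).pw (j+1) ≤
          auxU π (i n₁) ((⊤ : Submodule V (A n₁)).pw (j+1)) := by
        apply Submodule.mulSpan_le
        rintro u ⟨b', a, _, rfl⟩ w' hw'
        obtain ⟨c', c, hc, rfl⟩ := ih w' hw'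
        refine ⟨b' * (π • c' + i n₁ c) + i n₁ a * c', a * c,
          Submodule.mul_mem_mulSpan trivial hc, ?_⟩
        simp only [map_mul, smul_add, mul_add, add_mul, smul_mul_assoc, mul_smul_comm]
        abel
      exact key hw
  -- assemble
  have hx1 : x ∈ ((⊤ : Submodule V (B n₂)).pw j₂).pw j₁ :=
    Submodule.pw_pw _ j₁ j₂ hx
  have hx2 : β n₁ n₂ h₂ x ∈ (auxU π (i n₁) (⊤ : Submodule V (A n₁))).pw j₁ :=
    Submodule.pw_hom (β n₁ n₂ h₂) claimA j₁ x hx1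
  obtain ⟨b', a, ha, hba⟩ := claimC j₁ _ hx2
  obtain ⟨y, hy⟩ := hA₁ a ha
  have hcomp : β m n₂ (h₁.trans h₂) x = β m n₁ h₁ (β n₁ n₂ h₂ x) :=
    (DFunLike.congr_fun (hβcomp m n₁ n₂ h₁ h₂) x).symm
  have hcommi : β m n₁ h₁ (i n₁ a) = i m (α m n₁ h₁ a) :=
    (DFunLike.congr_fun (hsq_i m n₁ h₁) a).symm
  refine ⟨β m n₁ h₁ b' + i m y, ?_⟩
  rw [hcomp, hba, map_add, map_smul, hcommi, hy, map_smul, smul_add]
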